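/- Proposition (natural residual controls the restricted strong merit function): Suppose Assumptions 1 and 2 hold. Fix η > 0 and w ∈ 𝒲, let w′ := P_w(ηF(w)) = argmin_{z ∈ 𝒲} { ⟨ηF(w), z⟩ + (1/(2γ))‖z − w‖² }, and define the quadratic natural residual r_η(w) := ‖w − w′‖². Then for every D > 0, sup{ ⟨F(w′), w′ − z⟩ : z ∈ 𝒲, ‖w′ − z‖ ≤ D } ≤ (L + δ/(ηγ)) D √(r_η(w)). -/

import Mathlib

open scoped RealInnerProductSpace
open Finset MeasureTheory

/-- `Vec d` is the ambient space `ℝ^d` with its standard inner product. -/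
abbrev Vec (d : ℕ) := EuclideanSpace ℝ (Fin d)

/-- The dual norm `‖y‖_* = sup_{nrm x ≤ 1} ⟪x, y⟫` of a (general) norm `nrm` on `ℝ^d`. -/
noncomputable def dualNorm {d : ℕ} (nrm : Vec d → ℝ) (y : Vec d) : ℝ :=
  sSup ((fun x => (⟪x, y⟫ : ℝ)) '' {x | nrm x ≤ 1})

/-- The Bregman divergence `V_v(w) = ½‖w‖² − ½‖v‖² − ⟪∇½‖v‖², w − v⟫` of `½ nrm²`,
where `g` is the gradient map of `½ nrm²`. -/
noncomputable def breg {d : ℕ} (nrm : Vec d → ℝ) (g : Vec d → Vec d) (v w : Vec d) : ℝ :=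
  nrm w ^ 2 / 2 - nrm v ^ 2 / 2 - ⟪g v, w - v⟫

section Aux

variable {d : ℕ} {nrm : Vec d → ℝ}

lemma nrm_zero (hs : ∀ (c : ℝ) (x : Vec d), nrm (c • x) = |c| * nrm x) : nrm 0 = 0 := by
  have := hs 0 0
  simpa using this

lemma nrm_neg (hs : ∀ (c : ℝ) (x : Vec d), nrm (c • x) = |c| * nrm x) (x : Vec d) :
    nrm (-x) = nrm x := by
  have := hs (-1) x
  simpa using this

lemma nrm_nonneg (ha : ∀ x y : Vec d, nrm (x + y) ≤ nrm x + nrm y)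
    (hs : ∀ (c : ℝ) (x : Vec d), nrm (c • x) = |c| * nrm x) (x : Vec d) : 0 ≤ nrm x := by
  have h1 := ha x (-x)
  rw [add_neg_cancel, nrm_zero hs, nrm_neg hs] at h1
  linarith

lemma nrm_sum_le (ha : ∀ x y : Vec d, nrm (x + y) ≤ nrm x + nrm y)
    (hs : ∀ (c : ℝ) (x : Vec d), nrm (c • x) = |c| * nrm x)
    (s : Finset (Fin d)) (f : Fin d → Vec d) :
    nrm (∑ i ∈ s, f i) ≤ ∑ i ∈ s, nrm (f i) := by
  classical
  induction s using Finset.induction_on with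
  | empty => simp [nrm_zero hs]
  | insert _ _ hni ih =>
    rw [Finset.sum_insert hni, Finset.sum_insert hni]
    exact le_trans (ha _ _) (by linarith)

/-- Upper comparison with the Euclidean norm. -/
lemma nrm_upper (ha : ∀ x y : Vec d, nrm (x + y) ≤ nrm x + nrm y)
    (hs : ∀ (c : ℝ) (x : Vec d), nrm (c • x) = |c| * nrm x) :
    ∃ C > 0, ∀ x : Vec d, nrm x ≤ C * ‖x‖ := by
  classical
  set C : ℝ := (∑ i, nrm (EuclideanSpace.single i (1:ℝ))) + 1 with hC
  have hCpos : 0 < C := by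
    have : (0:ℝ) ≤ ∑ i, nrm (EuclideanSpace.single i (1:ℝ)) :=
      Finset.sum_nonneg fun i _ => nrm_nonneg ha hs _
    linarith
  refine ⟨C, hCpos, fun x => ?_⟩
  have hdecomp : x = ∑ i, x i • EuclideanSpace.single i (1:ℝ) := by
    ext j
    have : (∑ i, x i • EuclideanSpace.single i (1:ℝ)) j
        = ∑ i, (x i • EuclideanSpace.single i (1:ℝ)) j :=
      by rw [WithLp.ofLp_sum]; exact Finset.sum_apply j Finset.univ _
    rw [this]
    simp [EuclideanSpace.single_apply]
  have hcoord : ∀ i, |x i| ≤ ‖x‖ := by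
    intro i
    have h := abs_real_inner_le_norm (EuclideanSpace.single i (1:ℝ)) x
    simpa [EuclideanSpace.inner_single_left, EuclideanSpace.norm_single] using h
  calc nrm x = nrm (∑ i, x i • EuclideanSpace.single i (1:ℝ)) := by rw [← hdecomp]
    _ ≤ ∑ i, nrm (x i • EuclideanSpace.single i (1:ℝ)) := nrm_sum_le ha hs _ _
    _ = ∑ i, |x i| * nrm (EuclideanSpace.single i (1:ℝ)) := by simp [hs]
    _ ≤ ∑ i, ‖x‖ * nrm (EuclideanSpace.single i (1:ℝ)) := by
        refine Finset.sum_le_sum fun i _ => ?_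
        exact mul_le_mul_of_nonneg_right (hcoord i) (nrm_nonneg ha hs _)
    _ = (∑ i, nrm (EuclideanSpace.single i (1:ℝ))) * ‖x‖ := by
        rw [← Finset.mul_sum, mul_comm]
    _ ≤ C * ‖x‖ := by
        have : (0:ℝ) ≤ ‖x‖ := norm_nonneg x
        nlinarith

lemma nrm_continuous (ha : ∀ x y : Vec d, nrm (x + y) ≤ nrm x + nrm y)
    (hs : ∀ (c : ℝ) (x : Vec d), nrm (c • x) = |c| * nrm x) : Continuous nrm := by
  obtain ⟨C, hCpos, hC⟩ := nrm_upper ha hs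
  have key : ∀ x y : Vec d, |nrm x - nrm y| ≤ C * ‖x - y‖ := by
    intro x y
    have h1 : nrm x ≤ nrm (x - y) + nrm y := by
      have := ha (x - y) y
      simpa using this
    have h2 : nrm y ≤ nrm (x - y) + nrm x := by
      have := ha (y - x) x
      have hxy : nrm (y - x) = nrm (x - y) := by
        rw [← neg_sub x y, nrm_neg hs]
      simpa [hxy] using this
    have h3 := hC (x - y)
    rw [abs_le]
    constructor <;> linarith
  have : LipschitzWith (Real.toNNReal C) nrm := by
    refine LipschitzWith.of_dist_le_mul fun x y => ?_
    rw [Real.dist_eq, dist_eq_norm]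
    calc |nrm x - nrm y| ≤ C * ‖x - y‖ := key x y
      _ = (Real.toNNReal C : ℝ) * ‖x - y‖ := by
          rw [Real.coe_toNNReal C hCpos.le]
  exact this.continuous

/-- Lower comparison with the Euclidean norm. -/
lemma nrm_lower (hp : ∀ x : Vec d, x ≠ 0 → 0 < nrm x)
    (ha : ∀ x y : Vec d, nrm (x + y) ≤ nrm x + nrm y)
    (hs : ∀ (c : ℝ) (x : Vec d), nrm (c • x) = |c| * nrm x) :
    ∃ c > 0, ∀ x : Vec d, c * ‖x‖ ≤ nrm x := by
  by_cases htriv : ∀ x : Vec d, x = 0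
  · exact ⟨1, one_pos, fun x => by rw [htriv x]; simp [nrm_zero hs]⟩
  · push_neg at htriv
    obtain ⟨x₀, hx₀⟩ := htriv
    have hsne : (Metric.sphere (0:Vec d) 1).Nonempty := by
      refine ⟨‖x₀‖⁻¹ • x₀, ?_⟩
      have hn : ‖x₀‖ ≠ 0 := norm_ne_zero_iff.mpr hx₀
      simp [norm_smul, abs_of_nonneg (inv_nonneg.mpr (norm_nonneg x₀)),
        inv_mul_cancel₀ hn]
    obtain ⟨z, hz, hzmin⟩ := (isCompact_sphere (0:Vec d) 1).exists_isMinOn hsne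
      (nrm_continuous ha hs).continuousOn
    have hznorm : ‖z‖ = 1 := by simpa using hz
    have hzne : z ≠ 0 := by
      intro h; rw [h] at hznorm; simp at hznorm
    refine ⟨nrm z, hp z hzne, fun x => ?_⟩
    by_cases hx : x = 0
    · simp [hx, nrm_zero hs]
    · have hn : ‖x‖ ≠ 0 := norm_ne_zero_iff.mpr hx
      have hmem : ‖x‖⁻¹ • x ∈ Metric.sphere (0:Vec d) 1 := by
        simp [norm_smul, abs_of_nonneg (inv_nonneg.mpr (norm_nonneg x)),
          inv_mul_cancel₀ hn]
      have h1 : nrm z ≤ nrm (‖x‖⁻¹ • x) := hzmin hmem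
      rw [hs, abs_of_nonneg (inv_nonneg.mpr (norm_nonneg x))] at h1
      have hnpos : 0 < ‖x‖ := (norm_nonneg x).lt_of_ne' hn
      calc nrm z * ‖x‖ ≤ (‖x‖⁻¹ * nrm x) * ‖x‖ :=
            mul_le_mul_of_nonneg_right h1 (norm_nonneg x)
        _ = nrm x := by field_simp

lemma dualNorm_pair (hp : ∀ x : Vec d, x ≠ 0 → 0 < nrm x)
    (ha : ∀ x y : Vec d, nrm (x + y) ≤ nrm x + nrm y)
    (hs : ∀ (c : ℝ) (x : Vec d), nrm (c • x) = |c| * nrm x) :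
    (∀ y, 0 ≤ dualNorm nrm y) ∧
      ∀ x y : Vec d, (⟪x, y⟫ : ℝ) ≤ nrm x * dualNorm nrm y := by
  obtain ⟨c, hcpos, hc⟩ := nrm_lower hp ha hs
  have hbdd : ∀ y : Vec d, BddAbove ((fun x => (⟪x, y⟫ : ℝ)) '' {x | nrm x ≤ 1}) := by
    intro y
    refine ⟨‖y‖ / c, ?_⟩
    rintro _ ⟨x, hx, rfl⟩
    have h1 : c * ‖x‖ ≤ 1 := le_trans (hc x) hx
    have h2 : ‖x‖ ≤ 1 / c := by
      rw [le_div_iff₀ hcpos]; linarith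
    calc (⟪x, y⟫ : ℝ) ≤ ‖x‖ * ‖y‖ := real_inner_le_norm x y
      _ ≤ (1 / c) * ‖y‖ := mul_le_mul_of_nonneg_right h2 (norm_nonneg y)
      _ = ‖y‖ / c := by ring
  have h0mem : ∀ y : Vec d, (0:ℝ) ∈ (fun x => (⟪x, y⟫ : ℝ)) '' {x | nrm x ≤ 1} := by
    intro y
    exact ⟨0, by simp [nrm_zero hs], by simp⟩
  have hnonneg : ∀ y, 0 ≤ dualNorm nrm y := fun y => le_csSup (hbdd y) (h0mem y)
  refine ⟨hnonneg, fun x y => ?_⟩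
  by_cases hx : x = 0
  · simp [hx, nrm_zero hs]
  · have hnx : 0 < nrm x := hp x hx
    have hmem : (nrm x)⁻¹ • x ∈ {x | nrm x ≤ 1} := by
      simp only [Set.mem_setOf_eq, hs, abs_of_nonneg (inv_nonneg.mpr hnx.le)]
      rw [inv_mul_cancel₀ hnx.ne']
    have h1 : (⟪(nrm x)⁻¹ • x, y⟫ : ℝ) ≤ dualNorm nrm y :=
      le_csSup (hbdd y) ⟨_, hmem, rfl⟩
    rw [real_inner_smul_left] at h1
    have h2 := mul_le_mul_of_nonneg_left h1 hnx.le
    rwa [← mul_assoc, mul_inv_cancel₀ hnx.ne', one_mul] at h2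

end Aux

/-- **Proposition (natural residual controls the restricted strong merit function).**
Under Assumptions 1 and 2, for `η > 0`, `w ∈ W` and `w' = P_w(ηF(w))`, with the
quadratic natural residual `r_η(w) = ‖w − w'‖²`, one has for every `D > 0`
`sup{⟪F(w'), w' − z⟫ : z ∈ W, ‖w' − z‖ ≤ D} ≤ (L + δ/(ηγ)) D √(r_η(w))`. -/
theorem natural_residual_controls_merit
    {d : ℕ} (W : Set (Vec d)) (hWne : W.Nonempty) (hWcl : IsClosed W) (hWcv : Convex ℝ W)
    (F : Vec d → Vec d) (nrm : Vec d → ℝ) (g : Vec d → Vec d)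
    (L γ δ η : ℝ)
    -- `nrm` is a norm on ℝ^d
    (hnrm_pos : ∀ x : Vec d, x ≠ 0 → 0 < nrm x)
    (hnrm_add : ∀ x y : Vec d, nrm (x + y) ≤ nrm x + nrm y)
    (hnrm_smul : ∀ (c : ℝ) (x : Vec d), nrm (c • x) = |c| * nrm x)
    (hL : 0 < L) (hγ0 : 0 < γ) (hγ1 : γ ≤ 1) (hδ : 0 < δ) (hη : 0 < η)
    -- Assumption 1
    (hLip : ∀ v ∈ W, ∀ u ∈ W, dualNorm nrm (F v - F u) ≤ L * nrm (v - u))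
    -- Assumption 2
    (hgrad : ∀ x : Vec d, HasGradientAt (fun v : Vec d => nrm v ^ 2 / 2) (g x) x)
    (hstrong : ∀ v x : Vec d,
      nrm v ^ 2 / 2 + ⟪g v, x - v⟫ + γ / 2 * nrm (x - v) ^ 2 ≤ nrm x ^ 2 / 2)
    (hgbound : ∀ x : Vec d, dualNorm nrm (g x) ≤ δ * nrm x)
    -- w' = P_w(η F(w))
    (w w' : Vec d) (hwW : w ∈ W) (hw'W : w' ∈ W)
    (hprox : IsMinOn (fun x => (⟪η • F w, x⟫ : ℝ) + 1 / (2 * γ) * nrm (x - w) ^ 2) W w')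
    (D : ℝ) (hD : 0 < D) :
    ∀ v ∈ W, nrm (w' - v) ≤ D →
      (⟪F w', w' - v⟫ : ℝ) ≤ (L + δ / (η * γ)) * D * Real.sqrt (nrm (w - w') ^ 2) := by
  intro v hvW hvD
  obtain ⟨hdual_nonneg, hpair⟩ := dualNorm_pair hnrm_pos hnrm_add hnrm_smul
  have hnonneg := nrm_nonneg hnrm_add hnrm_smul
  have hneg := nrm_neg hnrm_smul
  set u : Vec d := v - w' with hu
  -- the path from w' towards v
  have hmem : ∀ t ∈ Set.Icc (0:ℝ) 1, w' + t • u ∈ W := by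
    intro t ht
    have h := hWcv hw'W hvW (a := 1 - t) (b := t) (by linarith [ht.2]) ht.1 (by ring)
    have heq : (1 - t) • w' + t • v = w' + t • u := by
      rw [hu]; module
    rwa [heq] at h
  -- variational inequality via one-sided derivative
  set c : ℝ := ⟪η • F w, u⟫ + (1/γ) * ⟪g (w' - w), u⟫ with hcdef
  have hVI : 0 ≤ c := by
    set ψ : ℝ → ℝ := fun t => (⟪η • F w, w' + t • u⟫ : ℝ) + 1 / (2 * γ) * nrm ((w' + t • u) - w) ^ 2
      with hψdef
    have hψmin : ∀ t ∈ Set.Icc (0:ℝ) 1, ψ 0 ≤ ψ t := by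
      intro t ht
      have h := isMinOn_iff.mp hprox _ (hmem t ht)
      have e0 : ψ 0 = (⟪η • F w, w'⟫ : ℝ) + 1 / (2 * γ) * nrm (w' - w) ^ 2 := by
        simp only [hψdef, zero_smul, add_zero]
      have et : ψ t = (⟪η • F w, w' + t • u⟫ : ℝ) + 1 / (2 * γ) * nrm ((w' + t • u) - w) ^ 2 := by
        simp only [hψdef]
      rw [e0, et]
      exact h
    -- derivative of ψ at 0
    have hline : HasDerivAt (fun t : ℝ => (w' + t • u) - w) u 0 := by
      have h1 : HasDerivAt (fun t : ℝ => t • u) ((1:ℝ) • u) 0 :=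
        (hasDerivAt_id (0:ℝ)).smul_const u
      have h2 : HasDerivAt (fun t : ℝ => (w' - w) + t • u) ((1:ℝ) • u) 0 := h1.const_add _
      have heq : (fun t : ℝ => (w' - w) + t • u) = fun t : ℝ => (w' + t • u) - w := by
        funext t; abel
      rw [heq] at h2
      simpa using h2
    have hgr := (hgrad (w' - w)).hasFDerivAt
    have hcomp : HasDerivAt (fun t : ℝ => nrm ((w' + t • u) - w) ^ 2 / 2)
        (⟪g (w' - w), u⟫ : ℝ) 0 := by
      have h0 : w' - w = (w' + (0:ℝ) • u) - w := by simp
      have hgr0 : HasFDerivAt (fun v : Vec d => nrm v ^ 2 / 2)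
          ((InnerProductSpace.toDual ℝ (Vec d)) (g (w' - w))) ((w' + (0:ℝ) • u) - w) := by
        rw [← h0]; exact hgr
      have h := hgr0.comp_hasDerivAt (0:ℝ) hline
      have happ : ((InnerProductSpace.toDual ℝ (Vec d)) (g (w' - w))) u
          = (⟪g (w' - w), u⟫ : ℝ) := InnerProductSpace.toDual_apply_apply
      rw [happ] at h
      exact h
    have hlin : HasDerivAt (fun t : ℝ => (⟪η • F w, w' + t • u⟫ : ℝ)) (⟪η • F w, u⟫ : ℝ) 0 := by
      have heq : (fun t : ℝ => (⟪η • F w, w' + t • u⟫ : ℝ))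
          = fun t : ℝ => (⟪η • F w, w'⟫ : ℝ) + t * ⟪η • F w, u⟫ := by
        funext t
        rw [inner_add_right, real_inner_smul_right]
      rw [heq]
      have := ((hasDerivAt_id (0:ℝ)).mul_const (⟪η • F w, u⟫ : ℝ)).const_add
        (⟪η • F w, w'⟫ : ℝ)
      simpa using this
    have hψderiv : HasDerivAt ψ c 0 := by
      have h2 := hcomp.const_mul (1/γ)
      have hsum := hlin.add h2
      have heq : ψ = fun t : ℝ => (⟪η • F w, w' + t • u⟫ : ℝ)
          + (1/γ) * (nrm ((w' + t • u) - w) ^ 2 / 2) := by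
        funext t
        simp only [hψdef]
        ring
      rw [heq, hcdef]
      exact hsum
    -- slope limit argument
    have hslope := hasDerivAt_iff_tendsto_slope.mp hψderiv
    have h1 : Filter.Tendsto (slope ψ 0) (nhdsWithin 0 (Set.Ioi 0)) (nhds c) :=
      hslope.mono_left (nhdsWithin_mono _ fun t ht => ne_of_gt ht)
    refine ge_of_tendsto h1 ?_
    filter_upwards [Ioo_mem_nhdsGT_of_mem (Set.left_mem_Ico.mpr one_pos)] with t ht
    have hψt : ψ 0 ≤ ψ t := hψmin t ⟨ht.1.le, ht.2.le⟩
    rw [slope_def_field]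
    apply div_nonneg (by linarith) (by linarith [ht.1])
  -- unpack the variational inequality
  have hVI2 : 0 ≤ γ * (η * (⟪F w, v - w'⟫ : ℝ)) + ⟪g (w' - w), v - w'⟫ := by
    have h1 : (⟪η • F w, u⟫ : ℝ) = η * ⟪F w, v - w'⟫ := by
      rw [hu, real_inner_smul_left]
    rw [hcdef, h1, hu] at hVI
    have hmul := mul_nonneg hγ0.le hVI
    have hexp : γ * (η * (⟪F w, v - w'⟫ : ℝ)
        + 1 / γ * ⟪g (w' - w), v - w'⟫)
        = γ * (η * (⟪F w, v - w'⟫ : ℝ)) + ⟪g (w' - w), v - w'⟫ := by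
      field_simp
    rw [hexp] at hmul
    exact hmul
  -- bound the two inner products
  have hNw : nrm (w - w') = nrm (w' - w) := by
    rw [← neg_sub w' w, hneg]
  have hNv : nrm (v - w') = nrm (w' - v) := by
    rw [← neg_sub w' v, hneg]
  set N : ℝ := nrm (w' - w) with hN
  have hNnn : 0 ≤ N := hnonneg _
  have term1 : (⟪F w' - F w, w' - v⟫ : ℝ) ≤ D * (L * N) := by
    have h1 : (⟪w' - v, F w' - F w⟫ : ℝ) ≤ nrm (w' - v) * dualNorm nrm (F w' - F w) :=
      hpair _ _
    have h2 : dualNorm nrm (F w' - F w) ≤ L * N := hLip w' hw'W w hwW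
    have h3 : nrm (w' - v) * dualNorm nrm (F w' - F w) ≤ D * (L * N) := by
      apply mul_le_mul hvD h2 (hdual_nonneg _) hD.le
    rw [real_inner_comm]
    linarith
  have term2 : (⟪F w, w' - v⟫ : ℝ) ≤ 1 / (η * γ) * (δ * N) * D := by
    have h1 : (⟪v - w', g (w' - w)⟫ : ℝ) ≤ nrm (v - w') * dualNorm nrm (g (w' - w)) :=
      hpair _ _
    have h2 : dualNorm nrm (g (w' - w)) ≤ δ * N := hgbound _
    have h3 : nrm (v - w') * dualNorm nrm (g (w' - w)) ≤ D * (δ * N) := by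
      apply mul_le_mul (by rw [hNv]; exact hvD) h2 (hdual_nonneg _) hD.le
    have h4 : (⟪g (w' - w), v - w'⟫ : ℝ) ≤ D * (δ * N) := by
      rw [real_inner_comm]; linarith
    have hPneg : (⟪F w, v - w'⟫ : ℝ) = - ⟪F w, w' - v⟫ := by
      rw [← inner_neg_right]; congr 1; abel
    have hηγ : 0 < η * γ := mul_pos hη hγ0
    have hgoal : 1 / (η * γ) * (δ * N) * D = ((δ * N) * D) / (η * γ) := by ring
    rw [hgoal, le_div_iff₀ hηγ]
    rw [hPneg] at hVI2
    nlinarith [hVI2, h4]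
  have hsqrt : Real.sqrt (nrm (w - w') ^ 2) = N := by
    rw [Real.sqrt_sq (hnonneg _), hNw]
  have hsplit : (⟪F w', w' - v⟫ : ℝ) = ⟪F w' - F w, w' - v⟫ + ⟪F w, w' - v⟫ := by
    rw [← inner_add_left]; congr 1; abel
  rw [hsqrt, hsplit]
  have hfinal : (L + δ / (η * γ)) * D * N = D * (L * N) + 1 / (η * γ) * (δ * N) * D := by
    ring
  rw [hfinal]
  linarith
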